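/- For all integers r ≥ 1 and D ≥ 2, the polynomial ∏_{1≤i<j≤D}(x_j−x_i)^r divides \bar F_{r,D}(x_1,…,x_D) in ℚ[x_1,…,x_D], and the polynomial \bar G_{r,D} := (−1)^{(D+1)·r(r−1)/2} · \bar F_{r,D} / ∏_{1≤i<j≤D}(x_j−x_i)^r is a symmetric polynomial of total degree at most r·C(rD−r,2) + D·C(r,2) − r·C(D,2), where C(n,2) = n(n−1)/2. -/

import Mathlib

open Nat Finset

/-- The Vandermonde product `∏_{1 ≤ i < j ≤ D} (x_j − x_i)`. -/
noncomputable def vand (D : ℕ) : MvPolynomial (Fin D) ℚ :=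
  ∏ p ∈ Finset.univ.filter (fun p : Fin D × Fin D => p.1 < p.2),
    (MvPolynomial.X p.2 - MvPolynomial.X p.1)

/-- `F̄_{r,D}(x_1,…,x_D)`: the determinant of the rD×rD matrix whose rows are indexed
(in lexicographic order) by pairs `(i,j)` encoding the row number `k = i·D + j ∈ {0,…,rD−1}`,
and whose columns are indexed by pairs `(m,v)` with `0 ≤ m ≤ r−1`, `1 ≤ v ≤ D` (lex order).
The first r rows (`k < r`, so `k = m'`) have entry 1 if `m = m'` and 0 otherwise; the
remaining rows correspond to `n = k − r + 1 ∈ {1,…,rD−r}` and have entry `B_{n+m}(x_v)/(n+m)`. -/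
noncomputable def Fbar (r D : ℕ) : MvPolynomial (Fin D) ℚ :=
  Matrix.det (Matrix.of fun (p q : Fin r × Fin D) =>
    if (p.1 : ℕ) * D + (p.2 : ℕ) < r then
      (if (q.1 : ℕ) = (p.1 : ℕ) * D + (p.2 : ℕ) then 1 else 0)
    else
      MvPolynomial.C ((((p.1 : ℕ) * D + (p.2 : ℕ) - r + 1 + (q.1 : ℕ) : ℕ) : ℚ))⁻¹ *
        Polynomial.aeval (MvPolynomial.X q.2)
          (Polynomial.bernoulli ((p.1 : ℕ) * D + (p.2 : ℕ) - r + 1 + (q.1 : ℕ))))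

/-- `Δ̄_{r,D}`: the determinant of the analogous rD×rD rational matrix whose first r rows
have entry `(−D)^{m'}` if `m = m'` and 0 otherwise, and whose remaining rows (indexed by
`n = 1,…,rD−r`) have `(n,(m,v))` entry `D^{n+m−1}·B_{n+m}(v/D)/(n+m)`. -/
noncomputable def deltaBar (r D : ℕ) : ℚ :=
  Matrix.det (Matrix.of fun (p q : Fin r × Fin D) =>
    if (p.1 : ℕ) * D + (p.2 : ℕ) < r then
      (if (q.1 : ℕ) = (p.1 : ℕ) * D + (p.2 : ℕ) then (-(D : ℚ)) ^ ((p.1 : ℕ) * D + (p.2 : ℕ)) else 0)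
    else
      (D : ℚ) ^ ((p.1 : ℕ) * D + (p.2 : ℕ) - r + (q.1 : ℕ)) *
        (Polynomial.bernoulli ((p.1 : ℕ) * D + (p.2 : ℕ) - r + 1 + (q.1 : ℕ))).eval
          (((q.2 : ℕ) + 1 : ℚ) / D) /
        (((p.1 : ℕ) * D + (p.2 : ℕ) - r + 1 + (q.1 : ℕ) : ℕ) : ℚ))

namespace Stmt19Aux

open MvPolynomial

/-- `X j - X i` is prime in `MvPolynomial (Fin D) ℚ` for `i ≠ j`. -/
lemma prime_X_sub_X {D : ℕ} (i j : Fin D) (h : i ≠ j) :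
    Prime (X j - X i : MvPolynomial (Fin D) ℚ) := by
  cases D with
  | zero => exact absurd i.2 (by omega)
  | succ d =>
    let σ : Equiv.Perm (Fin (d+1)) := Equiv.swap 0 j
    have hσj : σ j = 0 := Equiv.swap_apply_right 0 j
    have hσi : σ i ≠ 0 := fun hc => h (σ.injective (hc.trans hσj.symm))
    rw [← MulEquiv.prime_iff (renameEquiv ℚ σ).toMulEquiv]
    have h1 : (renameEquiv ℚ σ).toMulEquiv (X j - X i) =
        (X 0 - X (σ i) : MvPolynomial (Fin (d+1)) ℚ) := by
      simp [renameEquiv_apply, map_sub, rename_X, hσj]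
    rw [h1, ← MulEquiv.prime_iff (finSuccEquiv ℚ d).toMulEquiv]
    obtain ⟨t, ht⟩ : ∃ t : Fin d, σ i = t.succ := ⟨(σ i).pred hσi, by simp⟩
    have h2 : (finSuccEquiv ℚ d).toMulEquiv (X 0 - X (σ i)) =
        (Polynomial.X - Polynomial.C (X t) :
          Polynomial (MvPolynomial (Fin d) ℚ)) := by
      show (finSuccEquiv ℚ d) (X 0 - X (σ i)) = _
      rw [map_sub, finSuccEquiv_X_zero, ht, finSuccEquiv_X_succ]
    rw [h2]
    exact Polynomial.prime_X_sub_C _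

lemma X_sub_X_ne_zero {D : ℕ} (i j : Fin D) (h : i ≠ j) :
    (X j - X i : MvPolynomial (Fin D) ℚ) ≠ 0 :=
  (prime_X_sub_X i j h).ne_zero

/-- distinct ordered pairs give non-divisible linear forms -/
lemma not_dvd_X_sub_X {D : ℕ} {i j k l : Fin D} (hij : i < j) (hkl : k < l)
    (hne : (i, j) ≠ (k, l)) :
    ¬ ((X j - X i : MvPolynomial (Fin D) ℚ) ∣ (X l - X k)) := by
  rintro ⟨g, hg⟩
  obtain ⟨m0, hm0kl, hm0i, hm0j⟩ : ∃ m0 : Fin D, (m0 = k ∨ m0 = l) ∧ m0 ≠ i ∧ m0 ≠ j := by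
    by_cases hk : k = i ∨ k = j
    · rcases hk with rfl | rfl
      · exact ⟨l, Or.inr rfl, ne_of_gt hkl,
          fun hc => hne (by rw [hc])⟩
      · exact ⟨l, Or.inr rfl, ne_of_gt (lt_trans hij hkl), ne_of_gt hkl⟩
    · push_neg at hk
      exact ⟨k, Or.inl rfl, hk.1, hk.2⟩
  set f : Fin D → ℚ := fun v => if v = m0 then 1 else 0 with hf
  have h1 : eval f (X j - X i : MvPolynomial (Fin D) ℚ) = 0 := by
    simp [hf, Ne.symm hm0i, Ne.symm hm0j]
  have h2 : eval f (X l - X k : MvPolynomial (Fin D) ℚ) ≠ 0 := by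
    rcases hm0kl with rfl | rfl
    · have h3 : l ≠ m0 := ne_of_gt hkl
      simp [hf, h3]
    · have h3 : k ≠ m0 := ne_of_lt hkl
      simp [hf, h3]
  apply h2
  rw [hg, map_mul, h1, zero_mul]



lemma natDegree_bernoulli_le (n : ℕ) : (Polynomial.bernoulli n).natDegree ≤ n := by
  rw [Polynomial.bernoulli]
  exact Polynomial.natDegree_sum_le_of_forall_le _ _ (fun i hi =>
    (Polynomial.natDegree_monomial_le _).trans (Nat.sub_le _ _))

lemma td_aeval {D : ℕ} (v : Fin D) (p : Polynomial ℚ) :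
    (Polynomial.aeval (X v : MvPolynomial (Fin D) ℚ) p).totalDegree ≤ p.natDegree := by
  rw [Polynomial.aeval_eq_sum_range]
  refine (totalDegree_finset_sum _ _).trans ?_
  refine Finset.sup_le fun i hi => ?_
  refine (totalDegree_smul_le _ _).trans ?_
  refine (totalDegree_pow _ _).trans ?_
  simp only [totalDegree_X, mul_one]
  exact Nat.lt_succ_iff.mp (Finset.mem_range.mp hi)

lemma sub_dvd_aeval_sub {D : ℕ} (a b : MvPolynomial (Fin D) ℚ) (p : Polynomial ℚ) :
    a - b ∣ Polynomial.aeval a p - Polynomial.aeval b p := by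
  simp only [Polynomial.aeval_def, Polynomial.eval₂_eq_eval_map]
  exact Polynomial.sub_dvd_eval_sub a b _

/-- lower bound for total degree of (homogeneous) * q -/
lemma le_td_homog_mul {D : ℕ} {p q : MvPolynomial (Fin D) ℚ} {n : ℕ}
    (hp : p.IsHomogeneous n) (hp0 : p ≠ 0) (hq0 : q ≠ 0) :
    n + q.totalDegree ≤ (p * q).totalDegree := by
  set t := q.totalDegree with ht
  have hcomp : homogeneousComponent (n + t) (p * q) =
      p * homogeneousComponent t q := by
    conv_lhs => rw [← sum_homogeneousComponent q, Finset.mul_sum, map_sum]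
    rw [Finset.sum_eq_single t]
    · rw [homogeneousComponent_of_mem
        ((mem_homogeneousSubmodule _ _).mpr
          (hp.mul (homogeneousComponent_isHomogeneous t q))), if_pos rfl]
    · intro i hi hit
      rw [homogeneousComponent_of_mem
        ((mem_homogeneousSubmodule _ _).mpr
          (hp.mul (homogeneousComponent_isHomogeneous i q))),
        if_neg (fun hc => hit (by omega))]
    · intro h
      exact absurd (Finset.self_mem_range_succ t) h
  have hqt : homogeneousComponent t q ≠ 0 := by
    obtain ⟨d, hd, hdeg⟩ := Finset.exists_mem_eq_sup q.support
      (support_nonempty.mpr hq0) (fun s => s.sum fun _ e => e)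
    intro hc
    have : coeff d (homogeneousComponent t q) = coeff d q := by
      rw [coeff_homogeneousComponent, if_pos]
      show d.sum (fun _ e => e) = t
      exact hdeg ▸ rfl
    rw [hc] at this
    exact (mem_support_iff.mp hd) this.symm
  have hne : homogeneousComponent (n + t) (p * q) ≠ 0 := by
    rw [hcomp]; exact mul_ne_zero hp0 hqt
  by_contra hlt
  exact hne (homogeneousComponent_eq_zero _ _ (by omega))



noncomputable def Pent (r D : ℕ) (p : Fin r × Fin D) (m : Fin r) : Polynomial ℚ :=
  if (p.1 : ℕ) * D + (p.2 : ℕ) < r then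
    (if (m : ℕ) = (p.1 : ℕ) * D + (p.2 : ℕ) then 1 else 0)
  else
    Polynomial.C ((((p.1 : ℕ) * D + (p.2 : ℕ) - r + 1 + (m : ℕ) : ℕ) : ℚ))⁻¹ *
      Polynomial.bernoulli ((p.1 : ℕ) * D + (p.2 : ℕ) - r + 1 + (m : ℕ))

/-- the matrix whose determinant is `Fbar` -/
noncomputable def Mmat (r D : ℕ) : Matrix (Fin r × Fin D) (Fin r × Fin D) (MvPolynomial (Fin D) ℚ) :=
  Matrix.of fun p q => Polynomial.aeval (X q.2 : MvPolynomial (Fin D) ℚ) (Pent r D p q.1)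

lemma Fbar_eq (r D : ℕ) : Fbar r D = (Mmat r D).det := by
  unfold Fbar Mmat Pent
  congr 1
  ext p q
  simp only [Matrix.of_apply]
  split_ifs with h1 h2
  · simp
  · simp
  · rw [map_mul, Polynomial.aeval_C]
    rfl

lemma pow_dvd_Fbar (r D : ℕ) {i j : Fin D} (hij : i ≠ j) :
    (X j - X i : MvPolynomial (Fin D) ℚ) ^ r ∣ Fbar r D := by
  classical
  set R := MvPolynomial (Fin D) ℚ
  set d : R := X j - X i with hd
  set M := Mmat r D with hM
  have hdvd : ∀ (p : Fin r × Fin D) (m : Fin r), d ∣ (M p (m, j) - M p (m, i)) :=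
    fun p m => sub_dvd_aeval_sub _ _ (Pent r D p m)
  have key : ∀ s : Finset (Fin r),
      (Matrix.of fun p q : Fin r × Fin D =>
        if q.2 = j ∧ q.1 ∈ s then M p q - M p (q.1, i) else M p q).det = M.det := by
    intro s
    induction s using Finset.induction_on with
    | empty => refine congrArg _ (Matrix.ext fun p q => ?_); simp
    | @insert a s ha ih =>
      have hne : (a, j) ≠ ((a, i) : Fin r × Fin D) :=
        fun hc => hij.symm (congrArg Prod.snd hc)
      have heq : (Matrix.of fun p q : Fin r × Fin D =>
            if q.2 = j ∧ q.1 ∈ insert a s then M p q - M p (q.1, i) else M p q) =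
          Matrix.updateCol
            (Matrix.of fun p q : Fin r × Fin D =>
              if q.2 = j ∧ q.1 ∈ s then M p q - M p (q.1, i) else M p q)
            (a, j)
            (fun p =>
              (Matrix.of fun p q : Fin r × Fin D =>
                if q.2 = j ∧ q.1 ∈ s then M p q - M p (q.1, i) else M p q) p (a, j) +
              (-1 : R) • (Matrix.of fun p q : Fin r × Fin D =>
                if q.2 = j ∧ q.1 ∈ s then M p q - M p (q.1, i) else M p q) p (a, i)) := by
        refine Matrix.ext fun p q => ?_
        rw [Matrix.updateCol_apply]
        by_cases hq : q = (a, j)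
        · rw [if_pos hq]
          subst hq
          simp only [Matrix.of_apply]
          rw [if_pos (by simp : True ∧ a ∈ insert a s),
            if_neg (by simp [ha] : ¬(True ∧ a ∈ s)),
            if_neg (fun hc => hij hc.1), neg_one_smul]
          ring
        · rw [if_neg hq]
          simp only [Matrix.of_apply, Finset.mem_insert]
          have hcond : (q.2 = j ∧ (q.1 = a ∨ q.1 ∈ s)) ↔ (q.2 = j ∧ q.1 ∈ s) := by
            constructor
            · rintro ⟨h2, h1 | h1⟩
              · exact absurd (Prod.ext_iff.mpr ⟨h1, h2⟩) hq
              · exact ⟨h2, h1⟩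
            · rintro ⟨h2, h1⟩
              exact ⟨h2, Or.inr h1⟩
          simp only [hcond]
      rw [heq, Matrix.det_updateCol_add_smul_self _ hne (-1 : R)]
      exact ih
  set N : Matrix (Fin r × Fin D) (Fin r × Fin D) R :=
    Matrix.of fun p q => if h : q.2 = j then (hdvd p q.1).choose else M p q with hN
  have hfact : (Matrix.of fun p q : Fin r × Fin D =>
      if q.2 = j ∧ q.1 ∈ (Finset.univ : Finset (Fin r)) then M p q - M p (q.1, i) else M p q) =
      N * Matrix.diagonal (fun q : Fin r × Fin D => if q.2 = j then d else 1) := by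
    refine Matrix.ext fun p q => ?_
    obtain ⟨q1, q2⟩ := q
    rw [Matrix.mul_diagonal]
    simp only [Matrix.of_apply, Finset.mem_univ, and_true, hN]
    by_cases hq : q2 = j
    · subst hq
      rw [if_pos rfl, if_pos rfl, dif_pos rfl]
      exact ((hdvd p q1).choose_spec).trans (mul_comm _ _)
    · rw [if_neg (fun hc => hq hc), if_neg hq, dif_neg hq, mul_one]
  have hprod : (∏ q : Fin r × Fin D, (if q.2 = j then d else 1)) = d ^ r := by
    rw [Fintype.prod_prod_type]
    have hinner : ∀ a : Fin r, (∏ b : Fin D, (if ((a, b) : Fin r × Fin D).2 = j then d else 1)) = d := by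
      intro a
      rw [show (fun b : Fin D => (if ((a, b) : Fin r × Fin D).2 = j then d else 1)) =
        (fun b : Fin D => (if b = j then d else 1)) from rfl]
      rw [Finset.prod_ite_eq' Finset.univ j (fun _ => d), if_pos (Finset.mem_univ j)]
    rw [Finset.prod_congr rfl (fun a _ => hinner a), Finset.prod_const, Finset.card_univ,
      Fintype.card_fin]
  have : Fbar r D = d ^ r * N.det := by
    rw [Fbar_eq, ← hM, ← key Finset.univ, hfact, Matrix.det_mul, Matrix.det_diagonal, hprod,
      mul_comm]
  exact ⟨N.det, this⟩

lemma vand_pow_dvd (r D : ℕ) : vand D ^ r ∣ Fbar r D := by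
  classical
  rw [vand, ← Finset.prod_pow]
  set P := Finset.univ.filter (fun p : Fin D × Fin D => p.1 < p.2) with hP
  have hPlt : ∀ p ∈ P, p.1 < p.2 := fun p hp => (Finset.mem_filter.mp hp).2
  suffices H : ∀ s : Finset (Fin D × Fin D), s ⊆ P →
      (∏ p ∈ s, (X p.2 - X p.1 : MvPolynomial (Fin D) ℚ) ^ r) ∣ Fbar r D from
    H P (le_refl P)
  intro s hs
  induction s using Finset.induction_on with
  | empty => simpa using one_dvd _
  | @insert a s ha ih =>
    have hs' : s ⊆ P := fun x hx => hs (Finset.mem_insert_of_mem hx)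
    have haP : a ∈ P := hs (Finset.mem_insert_self a s)
    have hlt : a.1 < a.2 := hPlt a haP
    have hprime : Prime (X a.2 - X a.1 : MvPolynomial (Fin D) ℚ) :=
      prime_X_sub_X a.1 a.2 (ne_of_lt hlt)
    obtain ⟨g, hg⟩ := ih hs'
    have hdvd_a : (X a.2 - X a.1 : MvPolynomial (Fin D) ℚ) ^ r ∣
        (∏ p ∈ s, (X p.2 - X p.1 : MvPolynomial (Fin D) ℚ) ^ r) * g := by
      rw [← hg]; exact pow_dvd_Fbar r D (ne_of_lt hlt)
    have hnd : ¬ (X a.2 - X a.1 : MvPolynomial (Fin D) ℚ) ∣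
        ∏ p ∈ s, (X p.2 - X p.1 : MvPolynomial (Fin D) ℚ) ^ r := by
      intro hdd
      obtain ⟨b, hb, hdvd_b⟩ := hprime.exists_mem_finset_dvd hdd
      have hdvd_b' : (X a.2 - X a.1 : MvPolynomial (Fin D) ℚ) ∣ (X b.2 - X b.1) :=
        hprime.dvd_of_dvd_pow hdvd_b
      have hbP : b.1 < b.2 := hPlt b (hs' hb)
      refine not_dvd_X_sub_X hlt hbP ?_ hdvd_b'
      intro hc
      apply ha
      have : a = b := by
        have h1 : a.1 = b.1 := congrArg Prod.fst hc
        have h2 : a.2 = b.2 := congrArg Prod.snd hc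
        exact Prod.ext_iff.mpr ⟨h1, h2⟩
      rwa [this]
    obtain ⟨g2, hg2⟩ := hprime.pow_dvd_of_dvd_mul_left r hnd hdvd_a
    refine ⟨g2, ?_⟩
    rw [Finset.prod_insert ha, hg, hg2]
    ring

lemma filter_lt_eq_Ioi {D : ℕ} (i : Fin D) :
    Finset.univ.filter (fun j => i < j) = Finset.Ioi i := by
  ext x; simp

lemma vand_eq (D : ℕ) :
    vand D = ∏ i : Fin D, ∏ j ∈ Finset.Ioi i, (X j - X i : MvPolynomial (Fin D) ℚ) := by
  rw [vand, Finset.prod_filter, ← Finset.univ_product_univ, Finset.prod_product]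
  refine Finset.prod_congr rfl fun i _ => ?_
  rw [← filter_lt_eq_Ioi i, Finset.prod_filter]

lemma vand_det (D : ℕ) :
    (Matrix.vandermonde fun v : Fin D => (X v : MvPolynomial (Fin D) ℚ)).det = vand D := by
  rw [Matrix.det_vandermonde, vand_eq]

lemma rename_vand {D : ℕ} (σ : Equiv.Perm (Fin D)) :
    rename σ (vand D) =
      ((Equiv.Perm.sign σ : ℤ) : MvPolynomial (Fin D) ℚ) * vand D := by
  rw [← vand_det, AlgHom.map_det]
  have hmap : (rename (σ : Fin D → Fin D)).mapMatrix
        (Matrix.vandermonde fun v : Fin D => (X v : MvPolynomial (Fin D) ℚ)) =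
      (Matrix.vandermonde fun v : Fin D => (X v : MvPolynomial (Fin D) ℚ)).submatrix σ id := by
    refine Matrix.ext fun p q => ?_
    show rename (σ : Fin D → Fin D)
      ((Matrix.vandermonde fun v : Fin D => (X v : MvPolynomial (Fin D) ℚ)) p q) = _
    simp only [Matrix.vandermonde_apply, Matrix.submatrix_apply, id_eq]
    rw [map_pow, rename_X]
  rw [hmap, Matrix.det_permute, vand_det]

lemma rename_Fbar (r D : ℕ) (σ : Equiv.Perm (Fin D)) :
    rename σ (Fbar r D) =
      ((Equiv.Perm.sign σ : ℤ) : MvPolynomial (Fin D) ℚ) ^ r * Fbar r D := by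
  classical
  rw [Fbar_eq, AlgHom.map_det]
  set τ : Equiv.Perm (Fin r × Fin D) := Equiv.prodCongrRight (fun _ : Fin r => σ) with hτ
  have hmap : (rename (σ : Fin D → Fin D)).mapMatrix (Mmat r D) =
      (Mmat r D).submatrix id τ := by
    refine Matrix.ext fun p q => ?_
    obtain ⟨q1, q2⟩ := q
    show rename (σ : Fin D → Fin D) (Mmat r D p (q1, q2)) = _
    simp only [Matrix.submatrix_apply, id_eq, Mmat, Matrix.of_apply, hτ,
      Equiv.prodCongrRight_apply]
    rw [← Polynomial.aeval_algHom_apply, rename_X]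
  rw [hmap, Matrix.det_permute', ← Fbar_eq]
  congr 2
  have hsign : Equiv.Perm.sign τ = Equiv.Perm.sign σ ^ r := by
    rw [hτ, Equiv.Perm.sign_prodCongrRight, Finset.prod_const, Finset.card_univ,
      Fintype.card_fin]
  rw [hsign]
  push_cast
  rfl

lemma sum_fin_eq_choose (n : ℕ) : ∑ i : Fin n, (i : ℕ) = n.choose 2 := by
  rw [Fin.sum_univ_eq_sum_range (fun i => i) n, Finset.sum_range_id, Nat.choose_two_right]

lemma vand_isHomogeneous (D : ℕ) : (vand D).IsHomogeneous (D.choose 2) := by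
  have h1 : (vand D).IsHomogeneous (∑ i : Fin D, ∑ _j ∈ Finset.Ioi i, 1) := by
    rw [vand_eq]
    refine MvPolynomial.IsHomogeneous.prod _ _ _ fun i _ => ?_
    refine MvPolynomial.IsHomogeneous.prod _ _ _ fun j _ => ?_
    exact (isHomogeneous_X ℚ j).sub (isHomogeneous_X ℚ i)
  have h2 : (∑ i : Fin D, ∑ _j ∈ Finset.Ioi i, 1) = D.choose 2 := by
    have h3 : ∀ i : Fin D, (∑ _j ∈ Finset.Ioi i, 1) = D - 1 - (i : ℕ) := by
      intro i
      rw [Finset.sum_const, smul_eq_mul, mul_one, Fin.card_Ioi]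
    rw [Finset.sum_congr rfl fun i _ => h3 i,
      Fin.sum_univ_eq_sum_range (fun i => D - 1 - i) D,
      Finset.sum_range_reflect (fun t => t) D]
    rw [Finset.sum_range_id, Nat.choose_two_right]
  rwa [h2] at h1

lemma vand_ne_zero {D : ℕ} : vand D ≠ 0 := by
  rw [vand]
  refine Finset.prod_ne_zero_iff.mpr fun p hp => ?_
  exact X_sub_X_ne_zero _ _ (ne_of_lt (Finset.mem_filter.mp hp).2)

lemma td_entry (r D : ℕ) (p q : Fin r × Fin D) :
    (Mmat r D p q).totalDegree ≤
      (if (p.1 : ℕ) * D + (p.2 : ℕ) < r then 0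
        else (p.1 : ℕ) * D + (p.2 : ℕ) - r + 1 + (q.1 : ℕ)) := by
  refine (td_aeval q.2 _).trans ?_
  unfold Pent
  split_ifs with h h2
  · simp
  · simp
  · refine (Polynomial.natDegree_mul_le).trans ?_
    rw [Polynomial.natDegree_C, zero_add]
    exact natDegree_bernoulli_le _

lemma td_Fbar_le (r D : ℕ) (hr : 1 ≤ r) (hD : 1 ≤ D) :
    (Fbar r D).totalDegree ≤
      (∑ i ∈ Finset.range (r * D - r), (i + 1)) + (D - 1) * r.choose 2 := by
  classical
  set S := (∑ i ∈ Finset.range (r * D - r), (i + 1)) + (D - 1) * r.choose 2 with hS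
  rw [Fbar_eq, Matrix.det_apply]
  refine (totalDegree_finset_sum _ _).trans (Finset.sup_le fun σ _ => ?_)
  have hsmul : (Equiv.Perm.sign σ • ∏ q, Mmat r D (σ q) q).totalDegree ≤
      (∏ q : Fin r × Fin D, Mmat r D (σ q) q).totalDegree := by
    rw [Units.smul_def]
    exact totalDegree_smul_le _ _
  refine hsmul.trans ?_
  by_cases hzero : ∃ q : Fin r × Fin D,
      ((σ q).1 : ℕ) * D + ((σ q).2 : ℕ) < r ∧ (q.1 : ℕ) ≠ ((σ q).1 : ℕ) * D + ((σ q).2 : ℕ)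
  · obtain ⟨q, hlt, hne⟩ := hzero
    have hent : Mmat r D (σ q) q = 0 := by
      show Polynomial.aeval (X q.2 : MvPolynomial (Fin D) ℚ) (Pent r D (σ q) q.1) = 0
      unfold Pent
      rw [if_pos hlt, if_neg hne, map_zero]
    rw [Finset.prod_eq_zero (f := fun j : Fin r × Fin D => Mmat r D (σ j) j)
      (Finset.mem_univ q) hent, totalDegree_zero]
    exact Nat.zero_le _
  · push_neg at hzero
    refine (totalDegree_finset_prod _ _).trans ?_
    have hle : ∀ q : Fin r × Fin D, (Mmat r D (σ q) q).totalDegree ≤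
        (if ((σ q).1 : ℕ) * D + ((σ q).2 : ℕ) < r then 0
          else ((σ q).1 : ℕ) * D + ((σ q).2 : ℕ) - r + 1) +
        (if ((σ q).1 : ℕ) * D + ((σ q).2 : ℕ) < r then 0 else (q.1 : ℕ)) := by
      intro q
      refine (td_entry r D (σ q) q).trans ?_
      split_ifs <;> omega
    refine (Finset.sum_le_sum fun q _ => hle q).trans ?_
    rw [Finset.sum_add_distrib]
    have hk : ∀ p : Fin r × Fin D, (p.1 : ℕ) * D + (p.2 : ℕ) = ((finProdFinEquiv p : Fin (r * D)) : ℕ) := by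
      intro p
      show (p.1 : ℕ) * D + (p.2 : ℕ) = (p.2 : ℕ) + D * (p.1 : ℕ)
      ring
    -- Part 1
    have hpart1 : (∑ q : Fin r × Fin D,
        (if ((σ q).1 : ℕ) * D + ((σ q).2 : ℕ) < r then 0
          else ((σ q).1 : ℕ) * D + ((σ q).2 : ℕ) - r + 1)) =
        ∑ i ∈ Finset.range (r * D - r), (i + 1) := by
      rw [Equiv.sum_comp σ (fun p : Fin r × Fin D =>
        (if (p.1 : ℕ) * D + (p.2 : ℕ) < r then 0 else (p.1 : ℕ) * D + (p.2 : ℕ) - r + 1))]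
      rw [Fintype.sum_equiv finProdFinEquiv _
        (fun t : Fin (r * D) => (if (t : ℕ) < r then 0 else (t : ℕ) - r + 1))
        (fun p => by rw [hk p])]
      rw [Fin.sum_univ_eq_sum_range (fun t => (if t < r then 0 else t - r + 1)) (r * D)]
      have hrle : r ≤ r * D := Nat.le_mul_of_pos_right r hD
      rw [show Finset.range (r * D) = Finset.Ico 0 (r * D) from Finset.range_eq_Ico (r * D),
        ← Finset.sum_Ico_consecutive _ (Nat.zero_le r) hrle]
      have hfirst : (∑ t ∈ Finset.Ico 0 r, (if t < r then 0 else t - r + 1)) = 0 := by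
        refine Finset.sum_eq_zero fun t ht => ?_
        rw [if_pos (Finset.mem_Ico.mp ht).2]
      rw [hfirst, zero_add, Finset.sum_Ico_eq_sum_range]
      refine Finset.sum_congr rfl fun i _ => ?_
      rw [if_neg (by omega)]
      omega
    -- Part 2
    have htotal : (∑ q : Fin r × Fin D, (q.1 : ℕ)) = D * r.choose 2 := by
      rw [Fintype.sum_prod_type]
      have : ∀ a : Fin r, (∑ _b : Fin D, (a : ℕ)) = D * (a : ℕ) := by
        intro a
        rw [Finset.sum_const, smul_eq_mul, Finset.card_univ, Fintype.card_fin]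
      rw [Finset.sum_congr rfl fun a _ => this a, ← Finset.mul_sum, sum_fin_eq_choose]
    have hA : (∑ q : Fin r × Fin D,
        (if ((σ q).1 : ℕ) * D + ((σ q).2 : ℕ) < r then (q.1 : ℕ) else 0)) = r.choose 2 := by
      have hcongr : ∀ q : Fin r × Fin D,
          (if ((σ q).1 : ℕ) * D + ((σ q).2 : ℕ) < r then (q.1 : ℕ) else 0) =
          (if ((σ q).1 : ℕ) * D + ((σ q).2 : ℕ) < r
            then ((σ q).1 : ℕ) * D + ((σ q).2 : ℕ) else 0) := by
        intro q
        split_ifs with h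
        · exact hzero q h
        · rfl
      rw [Finset.sum_congr rfl fun q _ => hcongr q]
      rw [Equiv.sum_comp σ (fun p : Fin r × Fin D =>
        (if (p.1 : ℕ) * D + (p.2 : ℕ) < r then (p.1 : ℕ) * D + (p.2 : ℕ) else 0))]
      rw [Fintype.sum_equiv finProdFinEquiv _
        (fun t : Fin (r * D) => (if (t : ℕ) < r then (t : ℕ) else 0))
        (fun p => by rw [hk p])]
      rw [Fin.sum_univ_eq_sum_range (fun t => (if t < r then t else 0)) (r * D)]
      have hrle : r ≤ r * D := Nat.le_mul_of_pos_right r hD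
      rw [show Finset.range (r * D) = Finset.Ico 0 (r * D) from Finset.range_eq_Ico (r * D),
        ← Finset.sum_Ico_consecutive _ (Nat.zero_le r) hrle]
      have hsecond : (∑ t ∈ Finset.Ico r (r * D), (if t < r then t else 0)) = 0 := by
        refine Finset.sum_eq_zero fun t ht => ?_
        rw [if_neg (by have := (Finset.mem_Ico.mp ht).1; omega)]
      rw [hsecond, add_zero, show Finset.Ico 0 r = Finset.range r from (Finset.range_eq_Ico r).symm]
      rw [Finset.sum_congr rfl fun t ht => if_pos (Finset.mem_range.mp ht)]
      rw [Finset.sum_range_id, Nat.choose_two_right]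
    have hsplit : (∑ q : Fin r × Fin D,
        (if ((σ q).1 : ℕ) * D + ((σ q).2 : ℕ) < r then 0 else (q.1 : ℕ))) +
        (∑ q : Fin r × Fin D,
        (if ((σ q).1 : ℕ) * D + ((σ q).2 : ℕ) < r then (q.1 : ℕ) else 0)) =
        ∑ q : Fin r × Fin D, (q.1 : ℕ) := by
      rw [← Finset.sum_add_distrib]
      refine Finset.sum_congr rfl fun q _ => ?_
      split_ifs <;> omega
    have hpart2 : (∑ q : Fin r × Fin D,
        (if ((σ q).1 : ℕ) * D + ((σ q).2 : ℕ) < r then 0 else (q.1 : ℕ))) ≤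
        (D - 1) * r.choose 2 := by
      rw [hA, htotal] at hsplit
      rw [Nat.sub_one_mul]
      omega
    rw [hpart1]
    exact add_le_add_right hpart2 _

lemma gauss_sum (n : ℕ) : (∑ i ∈ Finset.range n, i) = n.choose 2 := by
  rw [Finset.sum_range_id, Nat.choose_two_right]

lemma arith_final (r D t : ℕ) (hr : 1 ≤ r) (hD : 2 ≤ D)
    (hstar : D.choose 2 * r + t ≤
      ((r * D - r).choose 2 + (r * D - r)) + (D - 1) * r.choose 2) :
    t ≤ r * (r * D - r).choose 2 + D * r.choose 2 - r * D.choose 2 := by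
  have hcomm : D.choose 2 * r = r * D.choose 2 := Nat.mul_comm _ _
  rcases Nat.lt_or_ge r 2 with hr2 | hr2
  · -- r = 1
    have hr1 : r = 1 := by omega
    subst hr1
    have hcr0 : Nat.choose 1 2 = 0 := by decide
    have hN : 1 * D - 1 = D - 1 := by omega
    have hkey : D.choose 2 = (D - 1).choose 2 + (D - 1) := by
      rw [← gauss_sum D, ← gauss_sum (D - 1)]
      conv_lhs => rw [show D = (D - 1) + 1 by omega]
      rw [Finset.sum_range_succ]
    rw [hN] at hstar ⊢
    rw [hcr0] at hstar ⊢
    have e1 : 1 * (D - 1).choose 2 = (D - 1).choose 2 := one_mul _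
    have e2 : D * 0 = 0 := mul_zero _
    have e3 : 1 * D.choose 2 = D.choose 2 := one_mul _
    omega
  · -- r ≥ 2
    set N := r * D - r with hN
    set cN := N.choose 2 with hcN
    set cr := r.choose 2 with hcr
    set c2 := D.choose 2 with hc2
    have hcrpos : 1 ≤ cr := Nat.choose_pos hr2
    have hN2 : 2 ≤ N := by
      have h5 : r * 2 ≤ r * D := Nat.mul_le_mul_left r hD
      omega
    have hcNge : N - 1 ≤ cN := by
      have h6 : (N - 1) * 2 ≤ (N - 1) * N := Nat.mul_le_mul_left (N - 1) hN2
      have h6' : (N - 1) * N = N * (N - 1) := Nat.mul_comm _ _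
      have h7 : cN = N * (N - 1) / 2 := Nat.choose_two_right N
      rw [h7, Nat.le_div_iff_mul_le (by norm_num)]
      omega
    have hA : 2 * cN ≤ r * cN := Nat.mul_le_mul_right cN hr2
    have hB : (D - 1) * cr + cr = D * cr := by
      have h8 : (D - 1) * cr = D * cr - cr := Nat.sub_one_mul D cr
      have h9 : cr ≤ D * cr := Nat.le_mul_of_pos_left cr (by omega)
      omega
    omega

end Stmt19Aux

/-- For all r ≥ 1 and D ≥ 2, `∏_{i<j}(x_j−x_i)^r` divides `F̄_{r,D}`, and
`Ḡ_{r,D} := (−1)^{(D+1)·r(r−1)/2}·F̄_{r,D}/∏_{i<j}(x_j−x_i)^r` is a symmetric polynomial of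
total degree at most `r·C(rD−r,2) + D·C(r,2) − r·C(D,2)`. -/
theorem vandermonde_pow_dvd_Fbar (r D : ℕ) (hr : 1 ≤ r) (hD : 2 ≤ D) :
    ∃ G : MvPolynomial (Fin D) ℚ,
      MvPolynomial.C ((-1 : ℚ) ^ ((D + 1) * (r * (r - 1) / 2))) * Fbar r D = vand D ^ r * G ∧
        G.IsSymmetric ∧
        G.totalDegree ≤
          r * Nat.choose (r * D - r) 2 + D * Nat.choose r 2 - r * Nat.choose D 2 := by
  classical
  obtain ⟨G₀, hG₀⟩ := Stmt19Aux.vand_pow_dvd r D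
  set ε : ℚ := (-1 : ℚ) ^ ((D + 1) * (r * (r - 1) / 2)) with hε
  refine ⟨MvPolynomial.C ε * G₀, by rw [hG₀]; ring, ?_, ?_⟩
  · -- symmetry
    have hsym0 : ∀ σ : Equiv.Perm (Fin D), MvPolynomial.rename σ G₀ = G₀ := by
      intro σ
      have h1 := congrArg (MvPolynomial.rename (σ : Fin D → Fin D)) hG₀
      rw [Stmt19Aux.rename_Fbar r D σ, map_mul, map_pow, Stmt19Aux.rename_vand σ,
        mul_pow, hG₀] at h1
      set s : MvPolynomial (Fin D) ℚ :=
        ((Equiv.Perm.sign σ : ℤ) : MvPolynomial (Fin D) ℚ) with hs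
      have hsne : s ≠ 0 := by
        rw [hs]
        rcases Int.units_eq_one_or (Equiv.Perm.sign σ) with h | h <;> rw [h] <;> norm_num
      have hvne : vand D ^ r ≠ 0 := pow_ne_zero _ Stmt19Aux.vand_ne_zero
      have h2 : s ^ r * (vand D ^ r * G₀) =
          s ^ r * (vand D ^ r * MvPolynomial.rename σ G₀) := by
        rw [h1]; ring
      have h3 := mul_left_cancel₀ (pow_ne_zero r hsne) h2
      exact (mul_left_cancel₀ hvne h3).symm
    intro σ
    rw [map_mul, MvPolynomial.rename_C, hsym0 σ]
  · -- degree bound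
    by_cases hG0 : G₀ = 0
    · rw [hG0, mul_zero, MvPolynomial.totalDegree_zero]
      exact Nat.zero_le _
    have hhom : (vand D ^ r).IsHomogeneous (D.choose 2 * r) :=
      (Stmt19Aux.vand_isHomogeneous D).pow r
    have hlow := Stmt19Aux.le_td_homog_mul hhom
      (pow_ne_zero _ Stmt19Aux.vand_ne_zero) hG0
    have hup : (vand D ^ r * G₀).totalDegree ≤
        (∑ i ∈ Finset.range (r * D - r), (i + 1)) + (D - 1) * r.choose 2 := by
      rw [← hG₀]
      exact Stmt19Aux.td_Fbar_le r D hr (by omega)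
    have htdC : (MvPolynomial.C ε * G₀).totalDegree ≤ G₀.totalDegree := by
      refine (MvPolynomial.totalDegree_mul _ _).trans ?_
      rw [MvPolynomial.totalDegree_C, zero_add]
    refine htdC.trans ?_
    have hsum : (∑ i ∈ Finset.range (r * D - r), (i + 1)) =
        (r * D - r).choose 2 + (r * D - r) := by
      rw [Finset.sum_add_distrib, Finset.sum_range_id, Finset.sum_const,
        Finset.card_range, smul_eq_mul, mul_one, Nat.choose_two_right]
    rw [hsum] at hup
    exact Stmt19Aux.arith_final r D _ hr hD (le_trans hlow hup)
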